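/- Let a_n be an increasing sequence with a_n → ∞, a_n/a_{n+1} decreasing, and a_{n+1}/a_n² → ∞. Let D be the family of translation-invariant metrics ρ on ℝ with ρ(0,x) ≤ |x|, and d := sup{ρ ∈ D : ρ(0, a_{n+1}) ≤ a_n for all n}. Then d is a translation-invariant metric on ℝ and (ℝ,d) is not linearly connected: writing q_n := (a_n + a_{n+1})/2, one has d(0, q_n)/a_n → ∞ while d(0,a_n) ≤ a_n and d(0,a_{n+1}) ≤ a_n, so no constant C exists with q_n ∈ B(0, C·a_n) for all n. -/

import Mathlib

open Filter

/-- `ρ` is a translation-invariant metric on `ℝ`. -/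
def IsTIMetric (ρ : ℝ → ℝ → ℝ) : Prop :=
  (∀ x y : ℝ, 0 ≤ ρ x y) ∧ (∀ x y : ℝ, ρ x y = 0 ↔ x = y) ∧
  (∀ x y : ℝ, ρ x y = ρ y x) ∧ (∀ x y z : ℝ, ρ x z ≤ ρ x y + ρ y z) ∧
  (∀ x y v : ℝ, ρ (x + v) (y + v) = ρ x y)

/-- The family `D` of translation-invariant metrics on `ℝ` with `ρ(0,x) ≤ |x|`. -/
def DFam : Set (ℝ → ℝ → ℝ) := {ρ | IsTIMetric ρ ∧ ∀ x : ℝ, ρ 0 x ≤ |x|}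

/-- `d := sup{ρ ∈ D : ρ(0, a_{n+1}) ≤ a_n for all n}`. -/
noncomputable def dSupSeq (a : ℕ → ℝ) (x y : ℝ) : ℝ :=
  sSup ((fun ρ : ℝ → ℝ → ℝ => ρ x y) ''
    {ρ ∈ DFam | ∀ n : ℕ, ρ 0 (a (n + 1)) ≤ a n})

noncomputable section DSupAux

namespace DSupAux

/-- Bound: any member of `DFam` satisfies `ρ x y ≤ |x - y|`. -/
lemma DFam_bound {ρ : ℝ → ℝ → ℝ} (hρ : ρ ∈ DFam) (x y : ℝ) : ρ x y ≤ |x - y| := by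
  obtain ⟨⟨_, _, hsymm, _, hTI⟩, hle⟩ := hρ
  have h1 : ρ x y = ρ (x - y) 0 := by simpa using hTI (x - y) 0 y
  rw [h1, hsymm]
  exact hle _

/-- The constrained family. -/
def Fam (a : ℕ → ℝ) : Set (ℝ → ℝ → ℝ) := {ρ ∈ DFam | ∀ n : ℕ, ρ 0 (a (n + 1)) ≤ a n}

lemma bddAbove_eval (a : ℕ → ℝ) (x y : ℝ) :
    BddAbove ((fun ρ : ℝ → ℝ → ℝ => ρ x y) '' Fam a) := by
  refine ⟨|x - y|, ?_⟩
  rintro r ⟨ρ, hρ, rfl⟩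
  exact DFam_bound hρ.1 x y

/-- The truncated metric `min |x-y| (a 0)` belongs to the constrained family. -/
lemma trunc_mem (a : ℕ → ℝ) (hpos : ∀ n, 0 < a n) (hmono : StrictMono a) :
    (fun x y : ℝ => min |x - y| (a 0)) ∈ Fam a := by
  refine ⟨⟨⟨?_, ?_, ?_, ?_, ?_⟩, ?_⟩, ?_⟩
  · intro x y; exact le_min (abs_nonneg _) (hpos 0).le
  · intro x y
    constructor
    · intro h
      rcases min_eq_iff.mp h with h' | h'
      · have := h'.1; have := abs_eq_zero.mp this; linarith [sub_eq_zero.mp this]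
      · exact absurd h'.1 (by linarith [hpos 0])
    · intro h; subst h; simp [hpos 0, le_of_lt (hpos 0)]
  · intro x y; dsimp only; rw [abs_sub_comm]
  · intro x y z
    dsimp only
    rcases le_or_gt (a 0) |x - y| with h1 | h1
    · have : min |x - z| (a 0) ≤ a 0 := min_le_right _ _
      have h2 : min |x - y| (a 0) = a 0 := min_eq_right h1
      have h3 : (0:ℝ) ≤ min |y - z| (a 0) := le_min (abs_nonneg _) (hpos 0).le
      linarith
    · rcases le_or_gt (a 0) |y - z| with h2 | h2
      · have : min |x - z| (a 0) ≤ a 0 := min_le_right _ _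
        have h3 : min |y - z| (a 0) = a 0 := min_eq_right h2
        have h4 : (0:ℝ) ≤ min |x - y| (a 0) := le_min (abs_nonneg _) (hpos 0).le
        linarith
      · have h3 : min |x - y| (a 0) = |x - y| := min_eq_left h1.le
        have h4 : min |y - z| (a 0) = |y - z| := min_eq_left h2.le
        have h5 : |x - z| ≤ |x - y| + |y - z| := abs_sub_le _ _ _
        have : min |x - z| (a 0) ≤ |x - z| := min_le_left _ _
        linarith
  · intro x y v; dsimp only
    rw [show x + v - (y + v) = x - y from by ring]
  · intro x; simpa using min_le_left |0 - x| (a 0)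
  · intro n
    have : a 0 ≤ a n := hmono.monotone (Nat.zero_le n)
    have : min |(0:ℝ) - a (n+1)| (a 0) ≤ a 0 := min_le_right _ _
    linarith

lemma fam_nonempty (a : ℕ → ℝ) (hpos : ∀ n, 0 < a n) (hmono : StrictMono a) :
    (Fam a).Nonempty := ⟨_, trunc_mem a hpos hmono⟩

/-! ### The inf-convolution member -/

variable (a : ℕ → ℝ) (c : ℝ) (n : ℕ)

/-- Generators: moving by `±a_{m+1}` at cost `a_m`, for `m ≥ n`. -/
def gen : Set (ℝ × ℝ) :=
  {p | ∃ m, n ≤ m ∧ (p = (a (m+1), a m) ∨ p = (-(a (m+1)), a m))}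

def G : AddSubmonoid (ℝ × ℝ) := AddSubmonoid.closure (gen a n)

def phiSet (x : ℝ) : Set ℝ :=
  (fun p : ℝ × ℝ => c * |x - p.1| + p.2) '' (G a n : Set (ℝ × ℝ))

def phi (x : ℝ) : ℝ := sInf (phiSet a c n x)

lemma zero_mem_G : ((0, 0) : ℝ × ℝ) ∈ G a n := zero_mem _

lemma neg_mem_G {p : ℝ × ℝ} (hp : p ∈ G a n) : (-p.1, p.2) ∈ G a n := by
  induction hp using AddSubmonoid.closure_induction with
  | mem x hx =>
      obtain ⟨m, hm, h | h⟩ := hx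
      · subst h; exact AddSubmonoid.subset_closure ⟨m, hm, Or.inr rfl⟩
      · subst h; simpa [G] using AddSubmonoid.subset_closure (s := gen a n) ⟨m, hm, Or.inl rfl⟩
  | zero => simpa using zero_mem_G a n
  | add x y hx hy ihx ihy =>
      have h : (-(x + y).1, (x + y).2) = ((-x.1, x.2) + (-y.1, y.2) : ℝ × ℝ) := by
        simp only [Prod.fst_add, Prod.snd_add, Prod.mk_add_mk, Prod.mk.injEq]
        exact ⟨by ring, trivial⟩
      rw [h]; exact add_mem ihx ihy

/-- The invariant property of elements of `G`. -/
lemma G_prop (hpos : ∀ m, 0 < a m) (hmono : StrictMono a) {p : ℝ × ℝ} (hp : p ∈ G a n) :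
    0 ≤ p.2 ∧ (a (n+1) ≤ p.2 ∨ ∃ z : ℤ, p.1 = z * a (n+1) ∧ |(z : ℝ)| * a n ≤ p.2) := by
  induction hp using AddSubmonoid.closure_induction with
  | mem x hx =>
      obtain ⟨m, hm, h | h⟩ := hx
      · subst h
        refine ⟨(hpos m).le, ?_⟩
        rcases eq_or_lt_of_le hm with h' | h'
        · subst h'; exact Or.inr ⟨1, by simp, by simp⟩
        · exact Or.inl (hmono.monotone h')
      · subst h
        refine ⟨(hpos m).le, ?_⟩
        rcases eq_or_lt_of_le hm with h' | h'
        · subst h'; exact Or.inr ⟨-1, by push_cast; ring, by simp⟩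
        · exact Or.inl (hmono.monotone h')
  | zero => exact ⟨le_refl 0, Or.inr ⟨0, by simp, by simp⟩⟩
  | add x y hx hy ihx ihy =>
      obtain ⟨hx0, hxc⟩ := ihx
      obtain ⟨hy0, hyc⟩ := ihy
      refine ⟨by simpa [Prod.add_def] using add_nonneg hx0 hy0, ?_⟩
      rcases hxc with h | ⟨z1, hz1, hz1'⟩
      · exact Or.inl (by simpa [Prod.add_def] using le_add_of_le_of_nonneg h hy0)
      rcases hyc with h | ⟨z2, hz2, hz2'⟩
      · exact Or.inl (by simpa [Prod.add_def] using le_add_of_nonneg_of_le hx0 h)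
      refine Or.inr ⟨z1 + z2, ?_, ?_⟩
      · simp only [Prod.add_def, hz1, hz2]; push_cast; ring
      · have habs : |((z1 + z2 : ℤ) : ℝ)| ≤ |(z1 : ℝ)| + |(z2 : ℝ)| := by
          push_cast; exact abs_add_le _ _
        have han : 0 < a n := hpos n
        have : |((z1 + z2 : ℤ) : ℝ)| * a n ≤ (|(z1 : ℝ)| + |(z2 : ℝ)|) * a n :=
          mul_le_mul_of_nonneg_right habs han.le
        simp only [Prod.add_def]
        nlinarith

lemma phiSet_nonempty (x : ℝ) : (phiSet a c n x).Nonempty :=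
  ⟨c * |x - 0| + 0, ⟨(0, 0), zero_mem_G a n, rfl⟩⟩

lemma phiSet_nonneg (hpos : ∀ m, 0 < a m) (hmono : StrictMono a) (hc0 : 0 ≤ c) (x : ℝ)
    {r : ℝ} (hr : r ∈ phiSet a c n x) : 0 ≤ r := by
  obtain ⟨p, hp, rfl⟩ := hr
  have := (G_prop a n hpos hmono hp).1
  positivity

lemma phiSet_bddBelow (hpos : ∀ m, 0 < a m) (hmono : StrictMono a) (hc0 : 0 ≤ c) (x : ℝ) :
    BddBelow (phiSet a c n x) :=
  ⟨0, fun r hr => phiSet_nonneg a c n hpos hmono hc0 x hr⟩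

lemma phi_nonneg (hpos : ∀ m, 0 < a m) (hmono : StrictMono a) (hc0 : 0 ≤ c) (x : ℝ) :
    0 ≤ phi a c n x :=
  Real.sInf_nonneg (fun r hr => phiSet_nonneg a c n hpos hmono hc0 x hr)

lemma phi_le_abs (hpos : ∀ m, 0 < a m) (hmono : StrictMono a) (hc0 : 0 ≤ c) (x : ℝ) :
    phi a c n x ≤ c * |x| := by
  have := csInf_le (phiSet_bddBelow a c n hpos hmono hc0 x)
    (⟨(0, 0), zero_mem_G a n, rfl⟩ : c * |x - 0| + 0 ∈ phiSet a c n x)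
  simpa [phi] using this

lemma phi_coin (hpos : ∀ m, 0 < a m) (hmono : StrictMono a) (hc0 : 0 ≤ c)
    {m : ℕ} (hm : n ≤ m) : phi a c n (a (m + 1)) ≤ a m := by
  have hmem : (a (m+1), a m) ∈ G a n := AddSubmonoid.subset_closure ⟨m, hm, Or.inl rfl⟩
  have := csInf_le (phiSet_bddBelow a c n hpos hmono hc0 _)
    (⟨(a (m+1), a m), hmem, rfl⟩ : c * |a (m+1) - a (m+1)| + a m ∈ phiSet a c n (a (m+1)))
  simpa [phi] using this

lemma phiSet_neg_subset (x : ℝ) : phiSet a c n (-x) ⊆ phiSet a c n x := by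
  rintro r ⟨p, hp, rfl⟩
  refine ⟨(-p.1, p.2), neg_mem_G a n hp, ?_⟩
  have : |(-x) - p.1| = |x - (-p.1)| := by rw [← abs_neg]; ring_nf
  simp [this]

lemma phi_even (x : ℝ) : phi a c n (-x) = phi a c n x := by
  have h1 := phiSet_neg_subset a c n x
  have h2 := phiSet_neg_subset a c n (-x)
  rw [neg_neg] at h2
  unfold phi
  rw [Set.Subset.antisymm h1 h2]

lemma phi_subadd (hpos : ∀ m, 0 < a m) (hmono : StrictMono a) (hc0 : 0 ≤ c) (x y : ℝ) :
    phi a c n (x + y) ≤ phi a c n x + phi a c n y := by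
  have key : ∀ r ∈ phiSet a c n x, ∀ s ∈ phiSet a c n y, phi a c n (x + y) ≤ r + s := by
    rintro r ⟨p, hp, rfl⟩ s ⟨q, hq, rfl⟩
    dsimp only
    have hmem : (p.1 + q.1, p.2 + q.2) ∈ G a n := by
      simpa [Prod.add_def] using add_mem hp hq
    have h1 : phi a c n (x + y) ≤ c * |x + y - (p.1 + q.1)| + (p.2 + q.2) :=
      csInf_le (phiSet_bddBelow a c n hpos hmono hc0 _) ⟨(p.1 + q.1, p.2 + q.2), hmem, rfl⟩
    have h2 : |x + y - (p.1 + q.1)| ≤ |x - p.1| + |y - q.1| := by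
      have : x + y - (p.1 + q.1) = (x - p.1) + (y - q.1) := by ring
      rw [this]; exact abs_add_le _ _
    nlinarith [mul_le_mul_of_nonneg_left h2 hc0]
  have h1 : ∀ r ∈ phiSet a c n x, phi a c n (x + y) - r ≤ phi a c n y := by
    intro r hr
    refine le_csInf (phiSet_nonempty a c n y) (fun s hs => ?_)
    linarith [key r hr s hs]
  have h2 : phi a c n (x + y) - phi a c n y ≤ phi a c n x := by
    refine le_csInf (phiSet_nonempty a c n x) (fun r hr => ?_)
    linarith [h1 r hr]
  linarith

lemma phi_lower_min (hpos : ∀ m, 0 < a m) (hmono : StrictMono a) (hc0 : 0 ≤ c) (x : ℝ) :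
    min (c * |x|) (a n) ≤ phi a c n x := by
  refine le_csInf (phiSet_nonempty a c n x) ?_
  rintro r ⟨p, hp, rfl⟩
  dsimp only
  obtain ⟨hW0, hor⟩ := G_prop a n hpos hmono hp
  have hn1 : a n ≤ a (n+1) := (hmono (Nat.lt_succ_self n)).le
  rcases hor with h | ⟨z, hz, hz'⟩
  · have : a n ≤ p.2 := le_trans hn1 h
    have h0 : 0 ≤ c * |x - p.1| := by positivity
    exact le_trans (min_le_right _ _) (by linarith)
  · rcases eq_or_ne z 0 with rfl | hz0
    · simp only [Int.cast_zero, zero_mul] at hz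
      rw [hz] at *
      have : min (c * |x|) (a n) ≤ c * |x| := min_le_left _ _
      simp only [sub_zero] at *
      linarith
    · have h1 : (1 : ℝ) ≤ |(z : ℝ)| := by
        rw [← Int.cast_abs]
        exact_mod_cast Int.one_le_abs hz0
      have : a n ≤ |(z : ℝ)| * a n := le_mul_of_one_le_left (hpos n).le h1
      have h0 : 0 ≤ c * |x - p.1| := by positivity
      exact le_trans (min_le_right _ _) (by linarith)

/-- The key lower bound: `phi q ≥ c q` for the midpoint `q = (a n + a (n+1))/2`. -/
lemma phi_mid (hpos : ∀ m, 0 < a m) (hmono : StrictMono a) (hc0 : 0 ≤ c) (hc1 : c ≤ 1) :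
    c * ((a n + a (n+1)) / 2) ≤ phi a c n ((a n + a (n+1)) / 2) := by
  set q : ℝ := (a n + a (n+1)) / 2 with hq
  have hn1 : a n < a (n+1) := hmono (Nat.lt_succ_self n)
  have hqpos : 0 < q := by have := hpos n; have := hpos (n+1); positivity
  have hqle : q ≤ a (n+1) := by rw [hq]; linarith
  refine le_csInf (phiSet_nonempty a c n q) ?_
  rintro r ⟨p, hp, rfl⟩
  dsimp only
  obtain ⟨hW0, hor⟩ := G_prop a n hpos hmono hp
  have habs0 : 0 ≤ c * |q - p.1| := by positivity
  rcases hor with h | ⟨z, hz, hz'⟩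
  · -- p.2 ≥ a (n+1) ≥ q ≥ c q
    have h1 : c * q ≤ q := by nlinarith
    linarith
  · rcases le_or_gt (z : ℝ) 0 with hzle | hzpos
    · -- S ≤ 0, so |q - S| ≥ q
      have hS : p.1 ≤ 0 := by
        rw [hz]
        exact mul_nonpos_of_nonpos_of_nonneg hzle (hpos (n+1)).le
      have : q ≤ |q - p.1| := le_trans (by linarith) (le_abs_self _)
      nlinarith [mul_le_mul_of_nonneg_left this hc0]
    · -- z ≥ 1
      have hz1 : (1 : ℤ) ≤ z := by exact_mod_cast Int.cast_pos.mp (by exact_mod_cast hzpos) 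
      have hz1' : (1 : ℝ) ≤ (z : ℝ) := by exact_mod_cast hz1
      have hSge : a (n+1) ≤ p.1 := by
        rw [hz]; nlinarith [hpos (n+1)]
      have habs : |q - p.1| = p.1 - q := by
        rw [abs_of_nonpos (by linarith)]; ring
      rcases eq_or_lt_of_le hz1 with h1 | h2
      · -- z = 1
        have hS1 : p.1 = a (n+1) := by rw [hz, ← h1]; simp
        have hzabs : |(z : ℝ)| = 1 := by rw [← h1]; simp
        rw [hzabs, one_mul] at hz'
        rw [habs, hS1]
        -- c*q ≤ c*(a(n+1) - q) + p.2 ;  2q - a(n+1) = a n ; c * a n ≤ a n ≤ p.2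
        have h2q : 2 * q - a (n+1) = a n := by rw [hq]; ring
        nlinarith [hpos n]
      · -- z ≥ 2
        have hz2 : (2 : ℝ) ≤ (z : ℝ) := by exact_mod_cast h2
        have hS2 : 2 * a (n+1) ≤ p.1 := by
          rw [hz]; nlinarith [hpos (n+1)]
        rw [habs]
        nlinarith [mul_le_mul_of_nonneg_left (show q ≤ p.1 - q by linarith) hc0]

/-- The metric associated to `phi`. -/
def rho (x y : ℝ) : ℝ := phi a c n (y - x)

lemma rho_mem (hpos : ∀ m, 0 < a m) (hmono : StrictMono a) (hc0 : 0 < c) (hc1 : c ≤ 1)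
    (hc2 : ∀ m, m < n → c * a (m + 1) ≤ a m) : rho a c n ∈ Fam a := by
  have hnn := phi_nonneg a c n hpos hmono hc0.le
  refine ⟨⟨⟨?_, ?_, ?_, ?_, ?_⟩, ?_⟩, ?_⟩
  · intro x y; exact hnn _
  · intro x y
    constructor
    · intro h
      by_contra hne
      have hyx : y - x ≠ 0 := sub_ne_zero.mpr (fun h' => hne (h'.symm))
      have h1 : 0 < min (c * |y - x|) (a n) := by
        have : 0 < |y - x| := abs_pos.mpr hyx
        have := hpos n
        have : 0 < c * |y - x| := by positivity
        exact lt_min this (hpos n)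
      have := phi_lower_min a c n hpos hmono hc0.le (y - x)
      rw [rho] at h
      linarith
    · intro h; subst h
      have h1 : phi a c n 0 ≤ c * |(0:ℝ)| := phi_le_abs a c n hpos hmono hc0.le 0
      simp at h1
      have h2 := hnn 0
      rw [rho]
      simp only [sub_self]
      linarith
  · intro x y
    rw [rho, rho, ← phi_even a c n (y - x)]
    congr 1; ring
  · intro x y z
    rw [rho, rho, rho]
    have : z - x = (y - x) + (z - y) := by ring
    rw [this]
    exact phi_subadd a c n hpos hmono hc0.le _ _
  · intro x y v; rw [rho, rho]; congr 1; ring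
  · intro x
    rw [rho]
    have h1 := phi_le_abs a c n hpos hmono hc0.le (x - 0)
    have h2 : c * |x - 0| ≤ 1 * |x - 0| := mul_le_mul_of_nonneg_right hc1 (abs_nonneg _)
    simp only [sub_zero] at *
    linarith
  · intro m
    rw [rho]
    simp only [sub_zero]
    rcases le_or_gt n m with hm | hm
    · exact phi_coin a c n hpos hmono hc0.le hm
    · have h1 := phi_le_abs a c n hpos hmono hc0.le (a (m+1))
      rw [abs_of_pos (hpos (m+1))] at h1
      exact le_trans h1 (hc2 m hm)

end DSupAux

end DSupAux

/-- For a positive increasing sequence `a_n → ∞` with `a_n/a_{n+1}` decreasing and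
`a_{n+1}/a_n² → ∞`, the supremal distance `d` above is a translation-invariant metric on
`ℝ` which is not linearly connected: with `q_n := (a_n + a_{n+1})/2` one has
`d(0,q_n)/a_n → ∞` while `d(0,a_n) ≤ a_n` and `d(0,a_{n+1}) ≤ a_n`, so there is no
constant `C` with `q_n ∈ B(0, C·a_n)` for all `n`. -/
theorem dSupSeq_not_linearly_connected (a : ℕ → ℝ)
    (hpos : ∀ n, 0 < a n) (hmono : StrictMono a)
    (htop : Tendsto a atTop atTop)
    (hratio : ∀ n, a (n + 1) / a (n + 2) ≤ a n / a (n + 1))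
    (hsq : Tendsto (fun n => a (n + 1) / (a n) ^ 2) atTop atTop) :
    IsTIMetric (dSupSeq a) ∧
    (∀ n : ℕ, dSupSeq a 0 (a n) ≤ a n ∧ dSupSeq a 0 (a (n + 1)) ≤ a n) ∧
    Tendsto (fun n : ℕ => dSupSeq a 0 ((a n + a (n + 1)) / 2) / a n) atTop atTop ∧
    ¬ ∃ C : ℝ, ∀ n : ℕ, dSupSeq a 0 ((a n + a (n + 1)) / 2) < C * a n := by
  classical
  -- basic setup
  have hbdd := DSupAux.bddAbove_eval a
  have hne := DSupAux.fam_nonempty a hpos hmono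
  have hd_le : ∀ x y : ℝ, dSupSeq a x y ≤ |x - y| := by
    intro x y
    refine Real.sSup_le ?_ (abs_nonneg _)
    rintro r ⟨ρ, hρ, rfl⟩
    exact DSupAux.DFam_bound hρ.1 x y
  have hd_nonneg : ∀ x y : ℝ, 0 ≤ dSupSeq a x y := by
    intro x y
    refine Real.sSup_nonneg ?_
    rintro r ⟨ρ, hρ, rfl⟩
    exact hρ.1.1.1 x y
  have hd_ge : ∀ (ρ : ℝ → ℝ → ℝ), ρ ∈ DSupAux.Fam a → ∀ x y : ℝ, ρ x y ≤ dSupSeq a x y := by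
    intro ρ hρ x y
    exact le_csSup (hbdd x y) ⟨ρ, hρ, rfl⟩
  -- the metric part
  have hmetric : IsTIMetric (dSupSeq a) := by
    refine ⟨hd_nonneg, ?_, ?_, ?_, ?_⟩
    · intro x y
      constructor
      · intro h
        by_contra hne'
        have h1 : min |x - y| (a 0) ≤ dSupSeq a x y :=
          hd_ge _ (DSupAux.trunc_mem a hpos hmono) x y
        have h2 : 0 < |x - y| := abs_pos.mpr (sub_ne_zero.mpr hne')
        have h3 : 0 < min |x - y| (a 0) := lt_min h2 (hpos 0)
        linarith
      · intro h; subst h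
        refine le_antisymm (Real.sSup_le ?_ le_rfl) (hd_nonneg x x)
        rintro r ⟨ρ, hρ, rfl⟩
        exact le_of_eq ((hρ.1.1.2.1 x x).mpr rfl)
    · intro x y
      show sSup _ = sSup _
      congr 1
      apply Set.image_congr
      intro ρ hρ
      exact hρ.1.1.2.2.1 x y
    · intro x y z
      refine Real.sSup_le ?_ (add_nonneg (hd_nonneg x y) (hd_nonneg y z))
      rintro r ⟨ρ, hρ, rfl⟩
      have h1 : ρ x z ≤ ρ x y + ρ y z := hρ.1.1.2.2.2.1 x y z
      have h2 : ρ x y ≤ dSupSeq a x y := hd_ge _ hρ x y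
      have h3 : ρ y z ≤ dSupSeq a y z := hd_ge _ hρ y z
      linarith
    · intro x y v
      show sSup _ = sSup _
      congr 1
      apply Set.image_congr
      intro ρ hρ
      exact hρ.1.1.2.2.2.2 x y v
  -- the two upper bounds
  have hupper : ∀ n : ℕ, dSupSeq a 0 (a n) ≤ a n ∧ dSupSeq a 0 (a (n + 1)) ≤ a n := by
    intro n
    constructor
    · refine Real.sSup_le ?_ (hpos n).le
      rintro r ⟨ρ, hρ, rfl⟩
      cases n with
      | zero =>
          have := hρ.1.2 (a 0)
          rwa [abs_of_pos (hpos 0)] at this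
      | succ m =>
          exact le_trans (hρ.2 m) (hmono (Nat.lt_succ_self m)).le
    · refine Real.sSup_le ?_ (hpos n).le
      rintro r ⟨ρ, hρ, rfl⟩
      exact hρ.2 n
  -- lower bound for midpoints, n ≥ 1
  have hratio_anti : ∀ m k : ℕ, m ≤ k → a k / a (k + 1) ≤ a m / a (m + 1) := by
    intro m k hmk
    induction k, hmk using Nat.le_induction with
    | base => exact le_rfl
    | succ k hk ih => exact le_trans (hratio k) ih
  have hlow : ∀ k : ℕ,
      (a k / a (k + 1)) * ((a (k+1) + a (k + 2)) / 2) ≤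
        dSupSeq a 0 ((a (k+1) + a (k + 2)) / 2) := by
    intro k
    set n := k + 1 with hn
    set c := a k / a (k + 1) with hc
    have hc0 : 0 < c := div_pos (hpos k) (hpos (k+1))
    have hc1 : c ≤ 1 := by
      rw [hc, div_le_one (hpos (k+1))]
      exact (hmono (Nat.lt_succ_self k)).le
    have hc2 : ∀ m, m < n → c * a (m + 1) ≤ a m := by
      intro m hm
      have hmk : m ≤ k := Nat.lt_succ_iff.mp hm
      have h1 : a k / a (k+1) ≤ a m / a (m+1) := hratio_anti m k hmk
      have h2 : 0 < a (m+1) := hpos (m+1)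
      calc c * a (m+1) ≤ (a m / a (m+1)) * a (m+1) :=
            mul_le_mul_of_nonneg_right h1 h2.le
        _ = a m := by field_simp
    have hmem := DSupAux.rho_mem a c n hpos hmono hc0 hc1 hc2
    have h1 := DSupAux.phi_mid a c n hpos hmono hc0.le hc1
    have h2 : DSupAux.rho a c n 0 ((a n + a (n+1)) / 2) = DSupAux.phi a c n ((a n + a (n+1)) / 2) := by
      rw [DSupAux.rho]; congr 1; ring
    have h3 := hd_ge _ hmem 0 ((a n + a (n+1)) / 2)
    rw [h2] at h3
    calc c * ((a n + a (n+1)) / 2) ≤ DSupAux.phi a c n ((a n + a (n+1)) / 2) := h1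
      _ ≤ dSupSeq a 0 ((a n + a (n+1)) / 2) := h3
  -- the tendsto part
  have htend : Tendsto (fun n : ℕ => dSupSeq a 0 ((a n + a (n + 1)) / 2) / a n) atTop atTop := by
    have hbase : Tendsto (fun n : ℕ => (a 0 / 2) * (a (n + 1) / (a n) ^ 2)) atTop atTop :=
      Tendsto.const_mul_atTop (by linarith [hpos 0]) hsq
    refine tendsto_atTop_mono' atTop ?_ hbase
    rw [Filter.EventuallyLE, eventually_atTop]
    refine ⟨1, ?_⟩
    intro n hn
    obtain ⟨k, rfl⟩ : ∃ k, n = k + 1 := ⟨n - 1, by omega⟩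
    have hlk := hlow k
    have h1 : 0 < a (k+1) := hpos (k+1)
    have h2 : 0 < a (k+2) := hpos (k+2)
    have h3 : 0 < a k := hpos k
    have h4 : a 0 ≤ a k := hmono.monotone (Nat.zero_le k)
    rw [le_div_iff₀ h1]
    have key : a 0 / 2 * (a (k+1+1) / a (k+1) ^ 2) * a (k+1) ≤
        (a k / a (k + 1)) * ((a (k+1) + a (k + 2)) / 2) := by
      have e1 : a 0 / 2 * (a (k+1+1) / a (k+1) ^ 2) * a (k+1)
          = (a 0 * a (k+2)) / (2 * a (k+1)) := by field_simp
      have e2 : (a k / a (k + 1)) * ((a (k+1) + a (k + 2)) / 2)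
          = (a k * (a (k+1) + a (k+2))) / (2 * a (k+1)) := by field_simp
      rw [e1, e2, div_le_div_iff₀ (by positivity) (by positivity)]
      have h5 : a 0 * a (k+2) ≤ a k * a (k+2) := mul_le_mul_of_nonneg_right h4 h2.le
      nlinarith [mul_le_mul_of_nonneg_right h5 (by positivity : (0:ℝ) ≤ 2 * a (k+1)),
        mul_pos (mul_pos h3 h1) h1]
    exact le_trans key hlk
  refine ⟨hmetric, hupper, htend, ?_⟩
  rintro ⟨C, hC⟩
  have h1 : ∀ n : ℕ, dSupSeq a 0 ((a n + a (n + 1)) / 2) / a n < C := by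
    intro n
    rw [div_lt_iff₀ (hpos n)]
    exact hC n
  obtain ⟨n, hn⟩ := (htend.eventually_ge_atTop C).exists
  exact absurd (h1 n) (not_lt.mpr hn)
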